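/- Let k be a positive integer, let G be a graph and let H be an induced subgraph of G with δ(H) ≥ max{5k−3, |V(H)|−k}. Suppose there are distinct vertices s,t ∈ V(H) and an (s,t)-path P in G all of whose internal vertices lie outside V(H), with at least p internal vertices. Then G contains a cycle with at least |V(H)|+p vertices. -/

import Mathlib

open SimpleGraph

/-- A (simple) path in `G`, packaged with its two end-vertices. -/
structure PathIn {V : Type*} (G : SimpleGraph V) where
  first : V
  last : V
  walk : G.Walk first last
  isPath : walk.IsPath

namespace PathIn

variable {V : Type*} {G : SimpleGraph V}

/-- The vertex set of the path. -/
def verts (P : PathIn G) : Set V := {x | x ∈ P.walk.support}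

/-- The internal (non-end) vertices of the path. -/
def internals (P : PathIn G) : Set V := {x | x ∈ P.walk.support.tail.dropLast}

/-- `x` is an end-vertex of the path. -/
def IsEndpoint (P : PathIn G) (x : V) : Prop := x = P.first ∨ x = P.last

end PathIn

/-- A path `P` is a one-terminal `T`-segment if it has at least 2 vertices, exactly
one of its end-vertices is in `T`, and all its other vertices are outside `T`. -/
def IsOneTerminalSegment {V : Type*} (G : SimpleGraph V) (T : Set V) (P : PathIn G) : Prop :=
  2 ≤ P.walk.support.length ∧
    ((P.first ∈ T ∧ ∀ x ∈ P.walk.support.tail, x ∉ T) ∨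
     (P.last ∈ T ∧ ∀ x ∈ P.walk.support.dropLast, x ∉ T))

/-- A path `P` is a two-terminal `T`-segment if it has at least 3 vertices, both of
its end-vertices are in `T`, and all its internal vertices are outside `T`. -/
def IsTwoTerminalSegment {V : Type*} (G : SimpleGraph V) (T : Set V) (P : PathIn G) : Prop :=
  3 ≤ P.walk.support.length ∧ P.first ∈ T ∧ P.last ∈ T ∧ ∀ x ∈ P.internals, x ∉ T

/-- The union of a family of paths, as a simple graph on the vertices of `G`. -/
def segUnionGraph {V : Type*} {G : SimpleGraph V} {r : ℕ} (P : Fin r → PathIn G) :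
    SimpleGraph V :=
  (⨆ i, (P i).walk.toSubgraph).spanningCoe

/-- A linear forest: a graph each of whose connected components is a path,
equivalently (for finite graphs) an acyclic graph of maximum degree at most 2. -/
def IsLinearForest {V : Type*} (F : SimpleGraph V) : Prop :=
  F.IsAcyclic ∧ ∀ v : V, (F.neighborSet v).ncard ≤ 2

/-- The paths `P i` are pairwise internally vertex-disjoint: a common vertex of two
of the paths must be an end-vertex of both. -/
def InternallyDisjoint {V : Type*} {G : SimpleGraph V} {r : ℕ} (P : Fin r → PathIn G) : Prop :=
  ∀ i j : Fin r, i ≠ j → ∀ x : V, x ∈ (P i).verts → x ∈ (P j).verts →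
    (P i).IsEndpoint x ∧ (P j).IsEndpoint x

/-- A system of `T`-segments: a family of two-terminal `T`-segments that are pairwise
internally vertex-disjoint and whose union is a linear forest. -/
def IsSegmentSystem {V : Type*} (G : SimpleGraph V) (T : Set V) {r : ℕ}
    (P : Fin r → PathIn G) : Prop :=
  (∀ i, IsTwoTerminalSegment G T (P i)) ∧
  InternallyDisjoint P ∧
  IsLinearForest (segUnionGraph P)

/-- An extended system of `T`-segments: (i) at least one and at most two of the paths
are one-terminal `T`-segments and the remaining ones are two-terminal `T`-segments;
(ii) the paths are pairwise internally vertex-disjoint and the end-vertex outside `T`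
of each one-terminal segment is distinct from all other vertices of the paths;
(iii) the union of the paths is a linear forest, and if there are two one-terminal
segments then their vertices lie in distinct components of this forest. -/
def IsExtendedSegmentSystem {V : Type*} (G : SimpleGraph V) (T : Set V) {r : ℕ}
    (P : Fin r → PathIn G) : Prop :=
  (∃ i, IsOneTerminalSegment G T (P i)) ∧
  (∀ i j l : Fin r, IsOneTerminalSegment G T (P i) → IsOneTerminalSegment G T (P j) →
      IsOneTerminalSegment G T (P l) → i = j ∨ i = l ∨ j = l) ∧
  (∀ i, IsOneTerminalSegment G T (P i) ∨ IsTwoTerminalSegment G T (P i)) ∧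
  InternallyDisjoint P ∧
  (∀ i, IsOneTerminalSegment G T (P i) → ∀ x : V, (P i).IsEndpoint x → x ∉ T →
      ∀ j, j ≠ i → x ∉ (P j).verts) ∧
  IsLinearForest (segUnionGraph P) ∧
  (∀ i j : Fin r, i ≠ j → IsOneTerminalSegment G T (P i) → IsOneTerminalSegment G T (P j) →
      ∀ x ∈ (P i).verts, ∀ y ∈ (P j).verts, ¬ (segUnionGraph P).Reachable x y)

/-- The total number of vertices of the paths of the family lying outside `T`. -/
noncomputable def outsideCount {V : Type*} {G : SimpleGraph V} {r : ℕ} (T : Set V)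
    (P : Fin r → PathIn G) : ℕ :=
  ((⋃ i, (P i).verts) \ T).ncard

/-- `H` is a `d`-core of `G`: an inclusion-maximal vertex set inducing a connected
subgraph of minimum degree at least `d`. -/
def IsDCore {V : Type*} (G : SimpleGraph V) (d : ℕ) (H : Set V) : Prop :=
  (G.induce H).Connected ∧
  (∀ v ∈ H, d ≤ (G.neighborSet v ∩ H).ncard) ∧
  ∀ H' : Set V, H ⊆ H' → (G.induce H').Connected →
    (∀ v ∈ H', d ≤ (G.neighborSet v ∩ H').ncard) → H' = H

section Aux
variable {V : Type*} [Fintype V] {G : SimpleGraph V} {H : Set V} {k : ℕ}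

lemma nn_bound (hk : 1 ≤ k) (v : V) (hv : v ∈ H)
    (hd : H.ncard - k ≤ (G.neighborSet v ∩ H).ncard) (hn : k ≤ H.ncard) :
    (H \ insert v (G.neighborSet v)).ncard ≤ k - 1 := by
  set D := G.neighborSet v ∩ H with hD
  have hsub : insert v D ⊆ H := by
    apply Set.insert_subset hv
    exact Set.inter_subset_right
  have heq : H \ insert v D = H \ insert v (G.neighborSet v) := by
    ext x
    simp only [Set.mem_diff, Set.mem_insert_iff, hD, Set.mem_inter_iff]
    tauto
  have hcard : (H \ insert v D).ncard + (insert v D).ncard = H.ncard :=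
    Set.ncard_diff_add_ncard_of_subset hsub
  have hvD : v ∉ D := by simp [hD]
  have hins : (insert v D).ncard = D.ncard + 1 := Set.ncard_insert_of_notMem hvD
  rw [heq] at hcard
  omega

lemma pick (hk : 1 ≤ k)
    (hNN : ∀ v ∈ H, (H \ insert v (G.neighborSet v)).ncard ≤ k - 1)
    (a b : V) (S : Set V) (ha : a ∈ H) (hb : b ∈ H)
    (hS : S.ncard + 2 * k < H.ncard) :
    ∃ v ∈ H, v ∉ S ∧ G.Adj a v ∧ G.Adj v b := by
  set Bad : Set V := (H \ insert a (G.neighborSet a)) ∪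
    ((H \ insert b (G.neighborSet b)) ∪ (S ∪ {a, b})) with hBad
  have hcard : Bad.ncard < H.ncard := by
    have h1 := Set.ncard_union_le (H \ insert a (G.neighborSet a))
      ((H \ insert b (G.neighborSet b)) ∪ (S ∪ {a, b}))
    have h2 := Set.ncard_union_le (H \ insert b (G.neighborSet b)) (S ∪ {a, b})
    have h3 := Set.ncard_union_le S ({a, b} : Set V)
    have h4 : ({a, b} : Set V).ncard ≤ 2 := by
      have := Set.ncard_insert_le a ({b} : Set V)
      simpa using this
    have h5 := hNN a ha
    have h6 := hNN b hb
    rw [← hBad] at h1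
    omega
  have hne : (H \ Bad).Nonempty := by
    rw [← Set.ncard_pos]
    have h7 : (H \ Bad).ncard + (H ∩ Bad).ncard = H.ncard := by
      have := Set.ncard_diff_add_ncard_of_subset (Set.inter_subset_left (s := H) (t := Bad))
      rw [show H \ (H ∩ Bad) = H \ Bad by ext x; simp +contextual [iff_def]] at this
      exact this
    have h8 : (H ∩ Bad).ncard ≤ Bad.ncard := Set.ncard_le_ncard Set.inter_subset_right
    omega
  obtain ⟨v, hvH, hvB⟩ := hne
  rw [hBad] at hvB
  simp only [Set.mem_union, Set.mem_diff, Set.mem_insert_iff, Set.mem_singleton_iff,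
    not_or, not_and, not_not] at hvB
  obtain ⟨hv1, hv2, hvS, hva, hvb⟩ := hvB
  exact ⟨v, hvH, hvS, hv1 hvH hva, (hv2 hvH hvb).symm⟩

end Aux

section Aux2
variable {V : Type*} [Fintype V] (G : SimpleGraph V) (H : Set V) (s t : V) (k : ℕ)

def GoodList (l : List V) : Prop :=
  l.Chain' G.Adj ∧ l.Nodup ∧ (∀ x ∈ l, x ∈ H) ∧ l.head? = some s ∧ l.getLast? = some t

variable {G H s t k}
variable (hk : 1 ≤ k)
  (hNN : ∀ v ∈ H, (H \ insert v (G.neighborSet v)).ncard ≤ k - 1)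

include hk hNN

lemma base_list (hs : s ∈ H) (ht : t ∈ H) (hst : s ≠ t) (hn : 2 * k < H.ncard) :
    ∃ l, GoodList G H s t l ∧ l.length = 3 := by
  obtain ⟨v, hvH, -, hadj1, hadj2⟩ := pick hk hNN s t ∅ hs ht (by simpa using hn)
  refine ⟨[s, v, t], ⟨?_, ?_, ?_, rfl, rfl⟩, rfl⟩
  · simp [List.Chain', List.isChain_cons_cons, hadj1, hadj2]
  · simp [hadj1.ne, hadj1.ne', hadj2.ne, hadj2.ne', hst]
  · intro x hx
    simp only [List.mem_cons, List.not_mem_nil, or_false] at hx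
    rcases hx with rfl | rfl | rfl <;> assumption

lemma head_insert {l : List V} (hG : GoodList G H s t l) (hlen : 2 ≤ l.length)
    (hsz : l.length + 2 * k < H.ncard) :
    ∃ l', GoodList G H s t l' ∧ l'.length = l.length + 1 := by
  classical
  obtain ⟨hc, hnd, hH, hhd, hlast⟩ := hG
  match l, hlen, hc, hnd, hH, hhd, hlast, hsz with
  | a :: u :: r, _, hc, hnd, hH, hhd, hlast, hsz =>
  have has : a = s := by simpa using hhd
  have hSl : ({x | x ∈ a :: u :: r} : Set V).ncard ≤ (a :: u :: r).length := by
    have h1 : ({x | x ∈ a :: u :: r} : Set V) = ↑(a :: u :: r).toFinset := by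
      ext x; simp
    rw [h1, Set.ncard_coe_finset]
    exact (a :: u :: r).toFinset_card_le
  simp only [List.length_cons] at hSl hsz
  have huH : u ∈ H := hH u (by simp)
  obtain ⟨v, hvH, hvS, hadj1, hadj2⟩ := pick hk hNN a u {x | x ∈ a :: u :: r}
    (hH a (by simp)) huH (by omega)
  simp only [Set.mem_setOf_eq] at hvS
  refine ⟨a :: v :: u :: r, ⟨?_, ?_, ?_, by simpa using has, ?_⟩, by simp⟩
  · unfold List.Chain' at hc ⊢
    rw [List.isChain_cons_cons, List.isChain_cons_cons]
    rw [List.isChain_cons_cons] at hc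
    exact ⟨hadj1, hadj2, hc.2⟩
  · simp only [List.nodup_cons, List.mem_cons, not_or] at hnd ⊢
    exact ⟨⟨fun h => hvS (by simp [h]), hnd.1.1, hnd.1.2⟩,
      ⟨fun h => hvS (by simp [h.symm]), fun h => hvS (by simp [h])⟩, hnd.2⟩
  · intro x hx
    simp only [List.mem_cons] at hx
    rcases hx with rfl | rfl | h
    · exact hH x (by simp)
    · exact hvH
    · exact hH x (by simp [h])
  · rw [List.getLast?_cons_cons]
    exact hlast

end Aux2
section Aux3
variable {V : Type*} [Fintype V] {G : SimpleGraph V} {H : Set V} {s t : V} {k : ℕ}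
variable (hk : 1 ≤ k)
  (hNN : ∀ v ∈ H, (H \ insert v (G.neighborSet v)).ncard ≤ k - 1)

include hk hNN

lemma find_pair {l : List V} (hnd : l.Nodup) (hH : ∀ x ∈ l, x ∈ H)
    {v : V} (hv : v ∈ H) (hvl : v ∉ l) (hlen : 2 * k ≤ l.length) :
    ∃ i, ∃ h : i + 1 < l.length, G.Adj v l[i] ∧ G.Adj v l[i + 1] := by
  classical
  by_contra hcon
  push_neg at hcon
  set A : Set V := H \ insert v (G.neighborSet v) with hA
  have hAfin : A.Finite := Set.toFinite A
  have hAcard : A.ncard ≤ k - 1 := hNN v hv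
  have hmemA : ∀ (i : ℕ) (h : i < l.length), ¬ G.Adj v l[i] → l[i] ∈ A := by
    intro i h hadj
    refine ⟨hH _ (List.getElem_mem h), ?_⟩
    simp only [Set.mem_insert_iff, SimpleGraph.mem_neighborSet, not_or]
    exact ⟨fun he => hvl (he ▸ List.getElem_mem h), hadj⟩
  set f : ℕ → V × Bool := fun i =>
    if h : i + 1 < l.length then
      (if G.Adj v l[i] then (l[i + 1], true) else (l[i], false))
    else (v, true) with hf
  have hmaps : ∀ i ∈ Finset.range (l.length - 1), f i ∈ hAfin.toFinset ×ˢ (Finset.univ : Finset Bool) := by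
    intro i hi
    rw [Finset.mem_range] at hi
    have h : i + 1 < l.length := by omega
    rw [hf]
    simp only [dif_pos h]
    by_cases hadj : G.Adj v l[i]
    · have hnadj : ¬ G.Adj v l[i + 1] := fun h2 => hcon i h hadj h2
      simp only [if_pos hadj, Finset.mem_product, Set.Finite.mem_toFinset]
      exact ⟨hmemA (i+1) h hnadj, Finset.mem_univ _⟩
    · simp only [if_neg hadj, Finset.mem_product, Set.Finite.mem_toFinset]
      exact ⟨hmemA i (by omega) hadj, Finset.mem_univ _⟩
  have hinj : Set.InjOn f (Finset.range (l.length - 1)) := by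
    intro i hi j hj hij
    simp only [Finset.coe_range, Set.mem_Iio] at hi hj
    have hi' : i + 1 < l.length := by omega
    have hj' : j + 1 < l.length := by omega
    rw [hf] at hij
    simp only [dif_pos hi', dif_pos hj'] at hij
    by_cases hai : G.Adj v l[i] <;> by_cases haj : G.Adj v l[j]
    · rw [if_pos hai, if_pos haj] at hij
      have := (hnd.getElem_inj_iff (hi := hi') (hj := hj')).mp (Prod.ext_iff.mp hij).1
      omega
    · rw [if_pos hai, if_neg haj] at hij
      exact absurd (Prod.ext_iff.mp hij).2 (by simp)
    · rw [if_neg hai, if_pos haj] at hij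
      exact absurd (Prod.ext_iff.mp hij).2 (by simp)
    · rw [if_neg hai, if_neg haj] at hij
      exact (hnd.getElem_inj_iff (hi := by omega) (hj := by omega)).mp (Prod.ext_iff.mp hij).1
  have hle := Finset.card_le_card_of_injOn f hmaps hinj
  rw [Finset.card_range, Finset.card_product, Finset.card_univ] at hle
  have hAc : hAfin.toFinset.card = A.ncard := (Set.ncard_eq_toFinset_card A hAfin).symm
  simp only [Fintype.card_bool, hAc] at hle
  omega

lemma insert_mid {l : List V} (hG : GoodList G H s t l) {v : V}
    (hv : v ∈ H) (hvl : v ∉ l) (hlen : 2 * k ≤ l.length) :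
    ∃ l', GoodList G H s t l' ∧ l'.length = l.length + 1 := by
  obtain ⟨hc, hnd, hH, hhd, hlast⟩ := hG
  obtain ⟨i, hi, hadj1, hadj2⟩ := find_pair hk hNN hnd hH hv hvl hlen
  set a := l[i] with ha
  set b := l[i + 1] with hb
  obtain ⟨l₁, l₂, hsplit⟩ : ∃ l₁ l₂, l = l₁ ++ a :: b :: l₂ := by
    refine ⟨l.take i, l.drop (i + 2), ?_⟩
    conv_lhs => rw [← List.take_append_drop i l]
    rw [List.drop_eq_getElem_cons (by omega), List.drop_eq_getElem_cons hi]
  set l' := l₁ ++ a :: v :: b :: l₂ with hl'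
  have hperm : l'.Perm (v :: l) := by
    have h1 : l' = (l₁ ++ [a]) ++ v :: (b :: l₂) := by simp [hl']
    have h2 : l = (l₁ ++ [a]) ++ (b :: l₂) := by simp [hsplit]
    rw [h1, h2]
    exact List.perm_middle
  refine ⟨l', ⟨?_, ?_, ?_, ?_, ?_⟩, by simpa using hperm.length_eq⟩
  · unfold List.Chain' at hc ⊢
    rw [hsplit, List.isChain_append] at hc
    rw [hl', List.isChain_append]
    refine ⟨hc.1, ?_, ?_⟩
    · rw [List.isChain_cons_cons, List.isChain_cons_cons]
      rw [List.isChain_cons_cons] at hc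
      exact ⟨hadj1.symm, hadj2, hc.2.1.2⟩
    · intro x hx y hy
      refine hc.2.2 x hx y ?_
      simpa using hy
  · rw [hperm.nodup_iff, List.nodup_cons]
    exact ⟨hvl, hnd⟩
  · intro x hx
    rw [hperm.mem_iff, List.mem_cons] at hx
    rcases hx with rfl | hx
    · exact hv
    · exact hH x hx
  · rw [hsplit] at hhd
    rw [hl']
    cases l₁ with
    | nil => simpa using hhd
    | cons c r => simpa using hhd
  · rw [hl', List.getLast?_append_cons, List.getLast?_cons_cons, List.getLast?_cons_cons]
    rw [hsplit, List.getLast?_append_cons, List.getLast?_cons_cons] at hlast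
    exact hlast

end Aux3
section Aux4
variable {V : Type*} [Fintype V] {G : SimpleGraph V} {H : Set V} {s t : V} {k : ℕ}

omit [Fintype V] in
lemma list_set_ncard {l : List V} (hnd : l.Nodup) :
    ({x | x ∈ l} : Set V).ncard = l.length := by
  classical
  have h1 : ({x | x ∈ l} : Set V) = ↑l.toFinset := by ext x; simp
  rw [h1, Set.ncard_coe_finset, List.toFinset_card_of_nodup hnd]

variable (hk : 1 ≤ k)
  (hNN : ∀ v ∈ H, (H \ insert v (G.neighborSet v)).ncard ≤ k - 1)

include hk hNN

lemma grow (hs : s ∈ H) (ht : t ∈ H) (hst : s ≠ t) (hn : 5 * k - 2 ≤ H.ncard) :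
    ∃ l, GoodList G H s t l ∧ l.length = H.ncard := by
  obtain ⟨l₀, hG₀, hlen₀⟩ := base_list hk hNN hs ht hst (by omega)
  have key : ∀ d (l : List V), GoodList G H s t l → 3 ≤ l.length →
      H.ncard - l.length = d → ∃ l', GoodList G H s t l' ∧ l'.length = H.ncard := by
    intro d
    induction d with
    | zero =>
      intro l hG h3 hd
      have hle : l.length ≤ H.ncard := by
        rw [← list_set_ncard hG.2.1]
        exact Set.ncard_le_ncard (fun x hx => hG.2.2.1 x hx)
      exact ⟨l, hG, by omega⟩
    | succ d ih =>
      intro l hG h3 hd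
      have hle : l.length ≤ H.ncard := by
        rw [← list_set_ncard hG.2.1]
        exact Set.ncard_le_ncard (fun x hx => hG.2.2.1 x hx)
      have hlt : l.length < H.ncard := by omega
      by_cases hcase : 2 * k ≤ l.length
      · have hne : (H \ {x | x ∈ l}).Nonempty := by
          rw [← Set.ncard_pos]
          have h7 : (H \ {x | x ∈ l}).ncard + (H ∩ {x | x ∈ l}).ncard = H.ncard := by
            have h8 := Set.ncard_diff_add_ncard_of_subset
              (Set.inter_subset_left (s := H) (t := {x | x ∈ l}))
            rw [show H \ (H ∩ {x | x ∈ l}) = H \ {x | x ∈ l} by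
              ext x; simp +contextual [iff_def]] at h8
            exact h8
          have h9 : (H ∩ {x | x ∈ l}).ncard ≤ ({x | x ∈ l} : Set V).ncard :=
            Set.ncard_le_ncard Set.inter_subset_right
          rw [list_set_ncard hG.2.1] at h9
          omega
        obtain ⟨v, hvH, hvl⟩ := hne
        obtain ⟨l', hG', hlen'⟩ := insert_mid hk hNN hG hvH (by simpa using hvl) hcase
        exact ih l' hG' (by omega) (by omega)
      · have hk2 : 2 ≤ k := by omega
        obtain ⟨l', hG', hlen'⟩ := head_insert hk hNN hG (by omega) (by omega)
        exact ih l' hG' (by omega) (by omega)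
  exact key (H.ncard - l₀.length) l₀ hG₀ (by omega) rfl

end Aux4

section Aux5
variable {V : Type*} {G : SimpleGraph V}

lemma walk_of_list : ∀ (l : List V), l.Chain' G.Adj → ∀ a b : V,
    l.head? = some a → l.getLast? = some b → ∃ w : G.Walk a b, w.support = l := by
  intro l
  induction l with
  | nil => intro _ a b h _; simp at h
  | cons x r ih =>
    intro hc a b hhd hlast
    obtain rfl : a = x := by simpa using hhd.symm
    cases r with
    | nil =>
      obtain rfl : b = a := by simpa using hlast.symm
      exact ⟨SimpleGraph.Walk.nil, by simp⟩
    | cons y r' =>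
      unfold List.Chain' at hc
      rw [List.isChain_cons_cons] at hc
      rw [List.getLast?_cons_cons] at hlast
      obtain ⟨w', hw'⟩ := ih hc.2 y b rfl hlast
      exact ⟨SimpleGraph.Walk.cons hc.1 w', by simp [hw']⟩

end Aux5
section Aux6
variable {V : Type*} {G : SimpleGraph V} {s t : V}

open SimpleGraph Walk

lemma no_st_edge (hst : s ≠ t) (W : G.Walk s t) (hW : W.IsPath) (hlen : 2 ≤ W.length) :
    s(s, t) ∉ W.edges := by
  cases W with
  | nil => simp
  | @cons _ v _ h' p =>
    intro he
    rw [Walk.edges_cons, List.mem_cons] at he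
    rcases he with he | he
    · have hv : v = t := by
        rcases Sym2.eq_iff.mp he with ⟨-, h2⟩ | ⟨-, h2⟩
        · exact h2.symm
        · exact absurd h2.symm hst
      subst hv
      have hnil : p = Walk.nil := Walk.isPath_iff_eq_nil.mp hW.of_cons
      rw [hnil] at hlen
      simp at hlen
    · have hs : s ∈ p.support := Walk.fst_mem_support_of_mem_edges p he
      have hnd := hW.support_nodup
      rw [Walk.support_cons, List.nodup_cons] at hnd
      exact hnd.1 hs

lemma mid_classify (q : G.Walk s t) (hst : s ≠ t) (hq1 : 1 ≤ q.length)
    {x : V} (hx : x ∈ q.support) (hxs : x ≠ s) (hxt : x ≠ t) :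
    x ∈ q.support.tail.dropLast := by
  have htne : q.support.tail ≠ [] := by
    have := q.length_support
    intro h
    rw [q.support_eq_cons, h] at this
    simp only [List.length_cons, List.length_nil] at this
    omega
  obtain ⟨y, r, htail⟩ : ∃ y r, q.support.tail = y :: r := by
    cases h : q.support.tail with
    | nil => exact absurd h htne
    | cons y r => exact ⟨y, r, rfl⟩
  have h1 : q.support.getLast? = some t := by
    rw [List.getLast?_eq_getLast q.support_ne_nil, q.getLast_support]
  have h2 : (y :: r).getLast? = some t := by
    rw [← h1, q.support_eq_cons, htail, List.getLast?_cons_cons]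
  have hsplit : (y :: r).dropLast ++ [t] = y :: r :=
    List.dropLast_append_getLast? t h2
  rw [q.support_eq_cons, htail, List.mem_cons] at hx
  rcases hx with rfl | hx
  · exact absurd rfl hxs
  · rw [htail]
    rw [← hsplit, List.mem_append] at hx
    rcases hx with hx | hx
    · exact hx
    · simp at hx
      exact absurd hx hxt

end Aux6


/-- Let `k ≥ 1` and let `H` be (the vertex set of) an induced subgraph of `G` with
`δ(H) ≥ max {5k - 3, |V(H)| - k}`. If there are distinct `s, t ∈ V(H)` and an
`(s,t)`-path in `G` whose internal vertices all lie outside `V(H)`, with at least `p`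
internal vertices, then `G` contains a cycle with at least `|V(H)| + p` vertices. -/

theorem cycle_of_long_segment {V : Type*} [Fintype V] (G : SimpleGraph V)
    (k p : ℕ) (hk : 1 ≤ k) (H : Set V)
    (hδ : ∀ v ∈ H, max (5 * k - 3) (H.ncard - k) ≤ (G.neighborSet v ∩ H).ncard)
    (s t : V) (hs : s ∈ H) (ht : t ∈ H) (hst : s ≠ t)
    (q : G.Walk s t) (hq : q.IsPath)
    (hint : ∀ x ∈ q.support.tail.dropLast, x ∉ H)
    (hp : p ≤ q.support.tail.dropLast.length) :
    ∃ (v : V) (c : G.Walk v v), c.IsCycle ∧ H.ncard + p ≤ c.length := by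
  classical
  set n := H.ncard with hn
  -- basic cardinality facts
  have hn1 : 1 ≤ n := (Set.ncard_pos (Set.toFinite H)).mpr ⟨s, hs⟩
  have hnk : 5 * k - 2 ≤ n := by
    have h1 := le_trans (le_max_left _ _) (hδ s hs)
    have h2 : G.neighborSet s ∩ H ⊆ H \ {s} := by
      intro x hx
      refine ⟨hx.2, fun hxs => ?_⟩
      rw [Set.mem_singleton_iff] at hxs
      subst hxs
      exact G.irrefl hx.1
    have h3 : (G.neighborSet s ∩ H).ncard ≤ (H \ {s}).ncard := Set.ncard_le_ncard h2
    rw [Set.ncard_diff_singleton_of_mem hs] at h3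
    omega
  have hNN : ∀ v ∈ H, (H \ insert v (G.neighborSet v)).ncard ≤ k - 1 := by
    intro v hv
    exact nn_bound hk v hv (le_trans (le_max_right _ _) (hδ v hv)) (by omega)
  -- Hamiltonian path in H from s to t
  obtain ⟨l, hG, hlen⟩ := grow hk hNN hs ht hst hnk
  obtain ⟨hc, hnd, hH, hhd, hlast⟩ := hG
  obtain ⟨W, hWsup⟩ := walk_of_list l hc s t hhd hlast
  have hWpath : W.IsPath := by rw [Walk.isPath_def, hWsup]; exact hnd
  have hWlen : W.length + 1 = n := by
    have := W.length_support
    rw [hWsup, hlen] at this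
    omega
  -- facts about q
  have hq1 : 1 ≤ q.length := by
    cases q with
    | nil => exact absurd rfl hst
    | cons h' p' => simp
  have hqp : p + 1 ≤ q.length := by
    have h1 := q.length_support
    rw [List.length_dropLast, List.length_tail, h1] at hp
    omega
  have hq_mid : ∀ x ∈ q.support, x ∈ H → x = s ∨ x = t := by
    intro x hx hxH
    by_contra hcon
    push_neg at hcon
    exact hint x (mid_classify q hst hq1 hx hcon.1 hcon.2) hxH
  -- the cycle
  refine ⟨s, W.append q.reverse, ?_, ?_⟩
  · rw [Walk.isCycle_def]
    refine ⟨?_, ?_, ?_⟩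
    · -- trail
      rw [Walk.isTrail_def, Walk.edges_append, List.nodup_append]
      refine ⟨hWpath.isTrail.edges_nodup, hq.reverse.isTrail.edges_nodup, ?_⟩
      intro e he1 e' he2 hee'
      subst hee'
      induction e using Sym2.ind with
      | _ a b =>
        have haW : a ∈ W.support := Walk.fst_mem_support_of_mem_edges W he1
        have hbW : b ∈ W.support := Walk.snd_mem_support_of_mem_edges W he1
        have haH : a ∈ H := hH a (hWsup ▸ haW)
        have hbH : b ∈ H := hH b (hWsup ▸ hbW)
        have haq : a ∈ q.support := by
          have := Walk.fst_mem_support_of_mem_edges q.reverse he2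
          rwa [Walk.support_reverse, List.mem_reverse] at this
        have hbq : b ∈ q.support := by
          have := Walk.snd_mem_support_of_mem_edges q.reverse he2
          rwa [Walk.support_reverse, List.mem_reverse] at this
        have hab : a ≠ b := by
          have := Walk.edges_subset_edgeSet W he1
          exact (G.ne_of_adj this)
        have hest : s(a, b) = s(s, t) := by
          rcases hq_mid a haq haH with rfl | rfl <;>
            rcases hq_mid b hbq hbH with rfl | rfl
          · exact absurd rfl hab
          · rfl
          · exact Sym2.eq_swap
          · exact absurd rfl hab
        rw [hest] at he1
        exact no_st_edge hst W hWpath (by omega) he1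
    · -- not nil
      intro hnil
      have : (W.append q.reverse).length = 0 := by rw [hnil]; rfl
      rw [Walk.length_append, Walk.length_reverse] at this
      omega
    · -- tail nodup
      rw [Walk.tail_support_append, List.nodup_append]
      have hW2 := hWpath.support_nodup
      rw [W.support_eq_cons, List.nodup_cons] at hW2
      have hqr2 := hq.reverse.support_nodup
      rw [q.reverse.support_eq_cons, List.nodup_cons] at hqr2
      refine ⟨hW2.2, hqr2.2, ?_⟩
      intro x hx1 y hx2 hxy
      subst hxy
      have hxW : x ∈ W.support := by rw [W.support_eq_cons]; exact List.mem_cons_of_mem _ hx1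
      have hxH : x ∈ H := hH x (hWsup ▸ hxW)
      have hxs : x ≠ s := fun h => hW2.1 (h ▸ hx1)
      have hxt : x ≠ t := fun h => hqr2.1 (h ▸ hx2)
      have hxq : x ∈ q.support := by
        have : x ∈ q.reverse.support := by
          rw [q.reverse.support_eq_cons]
          exact List.mem_cons_of_mem _ hx2
        rwa [Walk.support_reverse, List.mem_reverse] at this
      rcases hq_mid x hxq hxH with rfl | rfl
      · exact hxs rfl
      · exact hxt rfl
  · rw [Walk.length_append, Walk.length_reverse]
    omega
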